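/- Let N ≥ 1 and let x̂_m^{(n)} ∈ ℝ² (1 ≤ m ≤ 5, 1 ≤ n ≤ N) be families of image points such that for each n no three of the five points x̂_1^{(n)},…,x̂_5^{(n)} are collinear. Then there exist world points X_1,…,X_5 ∈ ℝ³ and real 3×4 matrices P_1,…,P_N such that P_n·[X_m;1] ∼ [x̂_m^{(n)};1] for all 1 ≤ m ≤ 5 and 1 ≤ n ≤ N; moreover one may take X_1 = (0,0,0), X_2 = (0,0,1), X_3 = (0,1,0), X_4 = (1,0,0), X_5 = (1,1,1). In particular, for M = 5 the reprojection-error objective of the WPfC problem attains the value zero (a global optimum). -/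

import Mathlib

open Matrix

noncomputable section

/-- Homogeneous lift of a point of `ℝ³`. -/
def lift3 (X : Fin 3 → ℝ) : Fin 4 → ℝ := Fin.snoc X 1

/-- Homogeneous lift of a point of `ℝ²`. -/
def lift2 (x : Fin 2 → ℝ) : Fin 3 → ℝ := Fin.snoc x 1

/-- `a ∼ b` : the vectors are parallel, i.e. equal up to a nonzero scalar. -/
def Par {n : ℕ} (a b : Fin n → ℝ) : Prop := ∃ lam : ℝ, lam ≠ 0 ∧ a = lam • b

lemma lift2_apply_two (x : Fin 2 → ℝ) : lift2 x 2 = 1 := by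
  simp [lift2, Fin.snoc]

lemma lift2_apply_lt (x : Fin 2 → ℝ) (i : Fin 3) (hi : (i:ℕ) < 2) : lift2 x i = x ⟨i, hi⟩ := by
  simp only [lift2, Fin.snoc, hi, dif_pos]
  rfl

lemma lift3_eval (p q r : ℝ) : lift3 ![p,q,r] = ![p,q,r,1] := by
  funext i
  fin_cases i <;> simp [lift3, Fin.snoc] <;> rfl

lemma collinear_of_dep (x y z : Fin 2 → ℝ) (c : Fin 3 → ℝ) (hc : c ≠ 0)
    (h : ∀ i, c 0 * lift2 x i + c 1 * lift2 y i + c 2 * lift2 z i = 0) :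
    Collinear ℝ ({x, y, z} : Set (Fin 2 → ℝ)) := by
  have hs : c 0 + c 1 + c 2 = 0 := by
    have := h 2; simpa [lift2_apply_two] using this
  have hx : ∀ i : Fin 2, c 0 * x i + c 1 * y i + c 2 * z i = 0 := by
    intro i
    fin_cases i
    · simpa [lift2_apply_lt _ 0 (by norm_num)] using h 0
    · simpa [lift2_apply_lt _ 1 (by norm_num)] using h 1
  by_cases h2 : c 2 ≠ 0
  · rw [collinear_iff_of_mem (show x ∈ ({x,y,z} : Set (Fin 2 → ℝ)) by simp)]
    refine ⟨y - x, ?_⟩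
    intro p hp
    simp only [Set.mem_insert_iff, Set.mem_singleton_iff] at hp
    rcases hp with rfl | rfl | rfl
    · exact ⟨0, by simp⟩
    · refine ⟨1, by funext i; simp⟩
    · refine ⟨-(c 1)/(c 2), ?_⟩
      funext i
      have hi := hx i
      show p i = ((-(c 1)/(c 2)) • (y - x) + x) i
      simp only [Pi.add_apply, Pi.smul_apply, Pi.sub_apply, smul_eq_mul]
      field_simp
      linear_combination hi - x i * hs
  · push_neg at h2
    by_cases h1 : c 1 ≠ 0
    · rw [collinear_iff_of_mem (show x ∈ ({x,y,z} : Set (Fin 2 → ℝ)) by simp)]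
      refine ⟨z - x, ?_⟩
      intro p hp
      simp only [Set.mem_insert_iff, Set.mem_singleton_iff] at hp
      rcases hp with rfl | rfl | rfl
      · exact ⟨0, by simp⟩
      · refine ⟨-(c 2)/(c 1), ?_⟩
        funext i
        have hi := hx i
        show p i = ((-(c 2)/(c 1)) • (z - x) + x) i
        simp only [Pi.add_apply, Pi.smul_apply, Pi.sub_apply, smul_eq_mul]
        field_simp
        linear_combination hi - x i * hs
      · exact ⟨1, by funext i; simp⟩
    · push_neg at h1
      by_cases h0 : c 0 ≠ 0
      · rw [collinear_iff_of_mem (show y ∈ ({x,y,z} : Set (Fin 2 → ℝ)) by simp)]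
        refine ⟨x - y, ?_⟩
        intro p hp
        simp only [Set.mem_insert_iff, Set.mem_singleton_iff] at hp
        rcases hp with rfl | rfl | rfl
        · exact ⟨1, by funext i; simp⟩
        · exact ⟨0, by simp⟩
        · refine ⟨0, ?_⟩
          exfalso
          apply h0
          linarith [hs, h1, h2]
      · push_neg at h0
        exfalso
        apply hc
        funext i
        fin_cases i <;> simp [h0, h1, h2]

def Wpts : Fin 5 → Fin 3 → ℝ := ![![0,0,0], ![0,0,1], ![0,1,0], ![1,0,0], ![1,1,1]]


set_option maxHeartbeats 1600000 in
lemma key (y : Fin 5 → Fin 2 → ℝ)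
    (h : ∀ i j k : Fin 5, i ≠ j → i ≠ k → j ≠ k →
      ¬ Collinear ℝ ({y i, y j, y k} : Set (Fin 2 → ℝ))) :
    ∃ P : Matrix (Fin 3) (Fin 4) ℝ, ∀ m, Par (P.mulVec (lift3 (Wpts m))) (lift2 (y m)) := by
  set A : Matrix (Fin 3) (Fin 3) ℝ := Matrix.of fun i j => lift2 (![y 0, y 1, y 2] j) i with hA
  have hdet : A.det ≠ 0 := by
    intro hd
    obtain ⟨c, hc0, hAc⟩ := Matrix.exists_mulVec_eq_zero_iff.2 hd
    refine h 0 1 2 (by decide) (by decide) (by decide) ?_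
    refine collinear_of_dep _ _ _ c hc0 (fun i => ?_)
    have := congrFun hAc i
    simpa [hA, Matrix.mulVec, dotProduct, Fin.sum_univ_three, mul_comm] using this
  have hinv : IsUnit A.det := isUnit_iff_ne_zero.2 hdet
  obtain ⟨a, ha'⟩ : ∃ a : Fin 3 → ℝ, A.mulVec a = lift2 (y 3) :=
    ⟨A⁻¹.mulVec (lift2 (y 3)), by
      rw [Matrix.mulVec_mulVec, Matrix.mul_nonsing_inv A hinv, Matrix.one_mulVec]⟩
  obtain ⟨b, hb'⟩ : ∃ b : Fin 3 → ℝ, A.mulVec b = lift2 (y 4) :=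
    ⟨A⁻¹.mulVec (lift2 (y 4)), by
      rw [Matrix.mulVec_mulVec, Matrix.mul_nonsing_inv A hinv, Matrix.one_mulVec]⟩
  have ha : ∀ i, a 0 * lift2 (y 0) i + a 1 * lift2 (y 1) i + a 2 * lift2 (y 2) i
      = lift2 (y 3) i := by
    intro i
    have := congrFun ha' i
    simpa [hA, Matrix.mulVec, dotProduct, Fin.sum_univ_three, mul_comm] using this
  have hb : ∀ i, b 0 * lift2 (y 0) i + b 1 * lift2 (y 1) i + b 2 * lift2 (y 2) i
      = lift2 (y 4) i := by
    intro i
    have := congrFun hb' i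
    simpa [hA, Matrix.mulVec, dotProduct, Fin.sum_univ_three, mul_comm] using this
  -- nonvanishing of coefficients
  have ha0 : a 0 ≠ 0 := by
    intro h0
    refine h 1 2 3 (by decide) (by decide) (by decide) ?_
    refine collinear_of_dep _ _ _ ![a 1, a 2, -1] (by
      intro hcc; have := congrFun hcc 2; simp at this) (fun i => ?_)
    have := ha i
    rw [h0] at this
    simp only [Matrix.cons_val_zero, Matrix.cons_val_one, Matrix.head_cons]
    show a 1 * lift2 (y 1) i + a 2 * lift2 (y 2) i + (-1) * lift2 (y 3) i = 0
    linarith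
  have ha1 : a 1 ≠ 0 := by
    intro h0
    refine h 0 2 3 (by decide) (by decide) (by decide) ?_
    refine collinear_of_dep _ _ _ ![a 0, a 2, -1] (by
      intro hcc; have := congrFun hcc 2; simp at this) (fun i => ?_)
    have := ha i
    rw [h0] at this
    show a 0 * lift2 (y 0) i + a 2 * lift2 (y 2) i + (-1) * lift2 (y 3) i = 0
    linarith
  have ha2 : a 2 ≠ 0 := by
    intro h0
    refine h 0 1 3 (by decide) (by decide) (by decide) ?_
    refine collinear_of_dep _ _ _ ![a 0, a 1, -1] (by
      intro hcc; have := congrFun hcc 2; simp at this) (fun i => ?_)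
    have := ha i
    rw [h0] at this
    show a 0 * lift2 (y 0) i + a 1 * lift2 (y 1) i + (-1) * lift2 (y 3) i = 0
    linarith
  have hb0 : b 0 ≠ 0 := by
    intro h0
    refine h 1 2 4 (by decide) (by decide) (by decide) ?_
    refine collinear_of_dep _ _ _ ![b 1, b 2, -1] (by
      intro hcc; have := congrFun hcc 2; simp at this) (fun i => ?_)
    have := hb i
    rw [h0] at this
    show b 1 * lift2 (y 1) i + b 2 * lift2 (y 2) i + (-1) * lift2 (y 4) i = 0
    linarith
  have hb1 : b 1 ≠ 0 := by
    intro h0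
    refine h 0 2 4 (by decide) (by decide) (by decide) ?_
    refine collinear_of_dep _ _ _ ![b 0, b 2, -1] (by
      intro hcc; have := congrFun hcc 2; simp at this) (fun i => ?_)
    have := hb i
    rw [h0] at this
    show b 0 * lift2 (y 0) i + b 2 * lift2 (y 2) i + (-1) * lift2 (y 4) i = 0
    linarith
  have hb2 : b 2 ≠ 0 := by
    intro h0
    refine h 0 1 4 (by decide) (by decide) (by decide) ?_
    refine collinear_of_dep _ _ _ ![b 0, b 1, -1] (by
      intro hcc; have := congrFun hcc 2; simp at this) (fun i => ?_)
    have := hb i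
    rw [h0] at this
    show b 0 * lift2 (y 0) i + b 1 * lift2 (y 1) i + (-1) * lift2 (y 4) i = 0
    linarith
  -- choose t
  set t : ℝ := |b 0 / a 0| + |b 1 / a 1| + |b 2 / a 2| + 1 with htDef
  have ht : t ≠ 0 := by positivity
  have hkey : ∀ (u v : ℝ), u ≠ 0 → |v / u| < t → u * t ≠ v := by
    intro u v hu hlt he
    have : t = v / u := by field_simp; linarith [he]
    rw [this] at hlt
    linarith [le_abs_self (v / u)]
  have ht0 : a 0 * t ≠ b 0 := hkey _ _ ha0 (by
    have h1 := abs_nonneg (b 1 / a 1); have h2 := abs_nonneg (b 2 / a 2); rw [htDef]; linarith)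
  have ht1 : a 1 * t ≠ b 1 := hkey _ _ ha1 (by
    have h1 := abs_nonneg (b 0 / a 0); have h2 := abs_nonneg (b 2 / a 2); rw [htDef]; linarith)
  have ht2 : a 2 * t ≠ b 2 := hkey _ _ ha2 (by
    have h1 := abs_nonneg (b 0 / a 0); have h2 := abs_nonneg (b 1 / a 1); rw [htDef]; linarith)
  -- the scalars
  set m0 : ℝ := a 0 * t - b 0 with hm0
  set m1 : ℝ := 2 * (b 1 - a 1 * t) with hm1
  set m2 : ℝ := 2 * (b 2 - a 2 * t) with hm2
  have hm0' : m0 ≠ 0 := by rw [hm0]; intro hc; apply ht0; linarith [hc]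
  have hm1' : m1 ≠ 0 := by rw [hm1]; intro hc; apply ht1; linarith [hc]
  have hm2' : m2 ≠ 0 := by rw [hm2]; intro hc; apply ht2; linarith [hc]
  -- the camera matrix
  refine ⟨Matrix.of fun i j =>
      ![ (2 * t * lift2 (y 3) i - m0 * lift2 (y 0) i),
         (m2 * lift2 (y 2) i - m0 * lift2 (y 0) i),
         (m1 * lift2 (y 1) i - m0 * lift2 (y 0) i),
         (m0 * lift2 (y 0) i) ] j, ?_⟩
  intro m
  fin_cases m
  · refine ⟨m0, hm0', ?_⟩
    funext i
    show _ = m0 * lift2 (y 0) i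
    simp [show ((⟨0, by norm_num⟩ : Fin 5)) = 0 from rfl, show ((⟨1, by norm_num⟩ : Fin 5)) = 1 from rfl, show ((⟨2, by norm_num⟩ : Fin 5)) = 2 from rfl, show ((⟨3, by norm_num⟩ : Fin 5)) = 3 from rfl, show ((⟨4, by norm_num⟩ : Fin 5)) = 4 from rfl, Wpts, lift3_eval, Matrix.mulVec, dotProduct, Fin.sum_univ_four]
  · refine ⟨m1, hm1', ?_⟩
    funext i
    show _ = m1 * lift2 (y 1) i
    simp [show ((⟨0, by norm_num⟩ : Fin 5)) = 0 from rfl, show ((⟨1, by norm_num⟩ : Fin 5)) = 1 from rfl, show ((⟨2, by norm_num⟩ : Fin 5)) = 2 from rfl, show ((⟨3, by norm_num⟩ : Fin 5)) = 3 from rfl, show ((⟨4, by norm_num⟩ : Fin 5)) = 4 from rfl, Wpts, lift3_eval, Matrix.mulVec, dotProduct, Fin.sum_univ_four]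
  · refine ⟨m2, hm2', ?_⟩
    funext i
    show _ = m2 * lift2 (y 2) i
    simp [show ((⟨0, by norm_num⟩ : Fin 5)) = 0 from rfl, show ((⟨1, by norm_num⟩ : Fin 5)) = 1 from rfl, show ((⟨2, by norm_num⟩ : Fin 5)) = 2 from rfl, show ((⟨3, by norm_num⟩ : Fin 5)) = 3 from rfl, show ((⟨4, by norm_num⟩ : Fin 5)) = 4 from rfl, Wpts, lift3_eval, Matrix.mulVec, dotProduct, Fin.sum_univ_four]
  · refine ⟨2 * t, by simp [ht], ?_⟩
    funext i
    show _ = (2 * t) * lift2 (y 3) i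
    simp [show ((⟨0, by norm_num⟩ : Fin 5)) = 0 from rfl, show ((⟨1, by norm_num⟩ : Fin 5)) = 1 from rfl, show ((⟨2, by norm_num⟩ : Fin 5)) = 2 from rfl, show ((⟨3, by norm_num⟩ : Fin 5)) = 3 from rfl, show ((⟨4, by norm_num⟩ : Fin 5)) = 4 from rfl, Wpts, lift3_eval, Matrix.mulVec, dotProduct, Fin.sum_univ_four]
  · refine ⟨2, two_ne_zero, ?_⟩
    funext i
    show _ = 2 * lift2 (y 4) i
    have h3 := ha i
    have h4 := hb i
    simp only [show ((⟨4, by norm_num⟩ : Fin 5)) = 4 from rfl]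
    rw [show Wpts 4 = ![1,1,1] from by simp [Wpts], lift3_eval]
    simp only [Matrix.mulVec, dotProduct, Fin.sum_univ_four,
      Matrix.of_apply, Matrix.cons_val_zero, Matrix.cons_val_one, Matrix.head_cons,
      Matrix.cons_val_two, Matrix.tail_cons, Matrix.cons_val_three]
    linear_combination (-2 * t) * h3 + 2 * h4


/-- M = 5 case of Proposition 2: if on each image no three of the five
image points are collinear, then the five correspondences admit an exact reconstruction,
with the canonical five world points. -/
theorem stmt11 {N : ℕ} (hN : 1 ≤ N) (xh : Fin 5 → Fin N → Fin 2 → ℝ)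
    (hcol : ∀ n, ∀ i j k : Fin 5, i ≠ j → i ≠ k → j ≠ k →
      ¬ Collinear ℝ ({xh i n, xh j n, xh k n} : Set (Fin 2 → ℝ))) :
    ∃ (X : Fin 5 → Fin 3 → ℝ) (P : Fin N → Matrix (Fin 3) (Fin 4) ℝ),
      (∀ m n, Par ((P n).mulVec (lift3 (X m))) (lift2 (xh m n))) ∧
      X 0 = ![0,0,0] ∧ X 1 = ![0,0,1] ∧ X 2 = ![0,1,0] ∧
      X 3 = ![1,0,0] ∧ X 4 = ![1,1,1] := by
  choose P hP using fun n => key (fun i => xh i n) (fun i j k hij hik hjk => hcol n i j k hij hik hjk)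
  exact ⟨Wpts, P, fun m n => hP n m, rfl, rfl, rfl, rfl, rfl⟩
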